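/- For pairwise distinct nonzero real numbers λ₁,…,λ_{n+1}, ∑_{σ∈S_{n+1}} ∏_{k=1}^{n} λ_{σ(k)}²/(λ_{σ(k)} − λ_{σ(k+1)}) = e_n(λ₁,…,λ_{n+1}), the n-th elementary symmetric polynomial. -/

import Mathlib

open Finset Polynomial

-- partition of unity evaluated
lemma lemB (n : ℕ) (v : Fin (n+1) → ℝ) (hv : Function.Injective v) (x : ℝ)
    (hx : ∀ i, v i ≠ x) :
    ∑ z, (∏ i ∈ univ.erase z, (v i)^2 / (v i - v z)) * ((v z)^2 / (v z - x))
      = ∏ i, (v i)^2 / (v i - x) := by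
  have hsb : ∑ z, Polynomial.eval x (Lagrange.basis univ v z) = 1 := by
    rw [← Polynomial.eval_finset_sum, Lagrange.sum_basis hv.injOn univ_nonempty,
      Polynomial.eval_one]
  calc ∑ z, (∏ i ∈ univ.erase z, (v i)^2 / (v i - v z)) * ((v z)^2 / (v z - x))
      = ∑ z, (∏ i, (v i)^2 / (v i - x)) * Polynomial.eval x (Lagrange.basis univ v z) := by
        refine Finset.sum_congr rfl fun z _ => ?_
        rw [Lagrange.basis, Polynomial.eval_prod, ← Finset.mul_prod_erase univ
            (fun i => (v i)^2/(v i - x)) (mem_univ z), mul_assoc, ← Finset.prod_mul_distrib,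
            mul_comm]
        congr 1
        refine Finset.prod_congr rfl fun i hi => ?_
        have hiz : v i - v z ≠ 0 := sub_ne_zero_of_ne (fun h => (mem_erase.mp hi).1 (hv h))
        have hzi : v z - v i ≠ 0 := sub_ne_zero_of_ne (fun h => (mem_erase.mp hi).1 (hv h).symm)
        have hix : v i - x ≠ 0 := sub_ne_zero_of_ne (hx i)
        rw [Lagrange.basisDivisor, Polynomial.eval_mul, Polynomial.eval_C, Polynomial.eval_sub,
          Polynomial.eval_X, Polynomial.eval_C]
        field_simp
        ring
    _ = ∏ i, (v i)^2 / (v i - x) := by rw [← Finset.mul_sum, hsb, mul_one]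

lemma derivative_finset_prod {ι : Type*} [DecidableEq ι] (s : Finset ι) (f : ι → ℝ[X]) :
    derivative (∏ i ∈ s, f i) = ∑ j ∈ s, (∏ i ∈ s.erase j, f i) * derivative (f j) := by
  induction s using Finset.induction_on with
  | empty => simp
  | insert a s ha ih =>
      rw [Finset.prod_insert ha, derivative_mul, ih, Finset.sum_insert ha,
        Finset.erase_insert ha, Finset.mul_sum]
      congr 1
      · exact mul_comm _ _
      refine Finset.sum_congr rfl fun j hj => ?_
      rw [Finset.erase_insert_of_ne (by rintro rfl; exact ha hj), Finset.prod_insert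
        (fun h => ha (Finset.mem_of_mem_erase h))]
      ring

lemma lemC (n : ℕ) (l : Fin (n+1) → ℝ) (hl : Function.Injective l) (hl0 : ∀ k, l k ≠ 0) :
    ∑ j, ∏ i ∈ univ.erase j, (l i)^2 / (l i - l j)
      = ∑ j, ∏ i ∈ univ.erase j, l i := by
  set Q : ℝ[X] := ∏ i, (C (l i) - X) with hQ
  set f : ℝ[X] := -Q.divX with hf
  have hQj : ∀ j, Q.eval (l j) = 0 := fun j => by
    rw [hQ, Polynomial.eval_prod]
    exact Finset.prod_eq_zero (mem_univ j) (by simp)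
  have hQ0 : Q.coeff 0 = ∏ i, l i := by
    rw [Polynomial.coeff_zero_eq_eval_zero, hQ, Polynomial.eval_prod]
    simp
  have hfj : ∀ j, f.eval (l j) = ∏ i ∈ univ.erase j, l i := by
    intro j
    have h1 := congrArg (Polynomial.eval (l j)) (Polynomial.X_mul_divX_add Q)
    rw [Polynomial.eval_add, Polynomial.eval_mul, Polynomial.eval_X, Polynomial.eval_C,
      hQj j, hQ0] at h1
    rw [← Finset.mul_prod_erase univ l (mem_univ j)] at h1
    have h2 : l j * Q.divX.eval (l j) = l j * -(∏ i ∈ univ.erase j, l i) := by linarith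
    have h3 := mul_left_cancel₀ (hl0 j) h2
    rw [hf, Polynomial.eval_neg, h3, neg_neg]
  have hQne : ∀ i : Fin (n+1), (C (l i) - X : ℝ[X]) ≠ 0 := by
    intro i
    have : (C (l i) - X : ℝ[X]) = -(X - C (l i)) := by ring
    rw [this, neg_ne_zero]
    exact Polynomial.X_sub_C_ne_zero (l i)
  have hQdeg : Q.natDegree = n + 1 := by
    rw [hQ, Polynomial.natDegree_prod _ _ (fun i _ => hQne i)]
    have : ∀ i : Fin (n+1), (C (l i) - X : ℝ[X]).natDegree = 1 := by
      intro i
      have h : (C (l i) - X : ℝ[X]) = -(X - C (l i)) := by ring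
      rw [h, Polynomial.natDegree_neg, Polynomial.natDegree_X_sub_C]
    simp [this]
  have hfdeg : f.degree < ((univ : Finset (Fin (n+1))).card : WithBot ℕ) := by
    rw [card_univ, Fintype.card_fin]
    calc f.degree ≤ (f.natDegree : WithBot ℕ) := Polynomial.degree_le_natDegree
      _ ≤ (n : WithBot ℕ) := by
          have h1 : f.natDegree ≤ n := by
            rw [hf, Polynomial.natDegree_neg, Polynomial.natDegree_divX_eq_natDegree_tsub_one,
              hQdeg]
            omega
          exact_mod_cast h1
      _ < ((n+1 : ℕ) : WithBot ℕ) := by exact_mod_cast Nat.lt_succ_self n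
  have hinterp := Lagrange.eq_interpolate (f := f) hl.injOn hfdeg
  have hev0 : f.eval 0 = ∑ j, ∏ i ∈ univ.erase j, l i := by
    have hc1 : Q.coeff 1 = -∑ j, ∏ i ∈ univ.erase j, l i := by
      have hd := Polynomial.coeff_derivative Q 0
      norm_num at hd
      rw [Polynomial.coeff_zero_eq_eval_zero, hQ, derivative_finset_prod] at hd
      have : Polynomial.eval 0 (∑ j, (∏ i ∈ univ.erase j, (C (l i) - X)) *
          derivative (C (l j) - X)) = ∑ j : Fin (n+1), -(∏ i ∈ univ.erase j, l i) := by
        rw [Polynomial.eval_finset_sum]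
        refine Finset.sum_congr rfl fun j _ => ?_
        rw [Polynomial.eval_mul, Polynomial.eval_prod]
        simp
      rw [this, ← hQ] at hd
      rw [← hd]
      simp
    have : f.eval 0 = -(Q.coeff 1) := by
      rw [hf, Polynomial.eval_neg, ← Polynomial.coeff_zero_eq_eval_zero, Polynomial.coeff_divX]
    rw [this, hc1, neg_neg]
  -- now assemble
  have key : ∑ j, ∏ i ∈ univ.erase j, (l i)^2 / (l i - l j)
      = ∑ j, (f.eval (l j)) * Polynomial.eval 0 (Lagrange.basis univ l j) := by
    refine Finset.sum_congr rfl fun j _ => ?_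
    rw [hfj j, Lagrange.basis, Polynomial.eval_prod, ← Finset.prod_mul_distrib]
    refine Finset.prod_congr rfl fun i hi => ?_
    rw [Lagrange.basisDivisor, Polynomial.eval_mul, Polynomial.eval_C, Polynomial.eval_sub,
      Polynomial.eval_X, Polynomial.eval_C]
    have hij : l i - l j ≠ 0 := sub_ne_zero_of_ne (fun h => (mem_erase.mp hi).1 (hl h))
    have hji : l j - l i ≠ 0 := sub_ne_zero_of_ne (fun h => (mem_erase.mp hi).1 (hl h).symm)
    field_simp
    ring
  have hfinal : f.eval 0 = ∑ j, (f.eval (l j)) * Polynomial.eval 0 (Lagrange.basis univ l j) := by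
    conv_lhs => rw [hinterp]
    rw [Lagrange.interpolate_apply, Polynomial.eval_finset_sum]
    refine Finset.sum_congr rfl fun j _ => ?_
    rw [Polynomial.eval_mul, Polynomial.eval_C]
  rw [key, ← hfinal, hev0]

lemma keyPerm : ∀ (n : ℕ) (l : Fin (n+1) → ℝ), Function.Injective l → ∀ j : Fin (n+1),
    (∑ σ ∈ univ.filter fun σ : Equiv.Perm (Fin (n+1)) => σ (Fin.last n) = j,
      ∏ k : Fin n, (l (σ k.castSucc))^2 / (l (σ k.castSucc) - l (σ k.succ)))
    = ∏ i ∈ univ.erase j, (l i)^2 / (l i - l j) := by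
  intro n
  induction n with
  | zero =>
      intro l hl j
      have h1 : (univ.filter fun σ : Equiv.Perm (Fin 1) => σ (Fin.last 0) = j) = univ :=
        Finset.filter_true_of_mem fun σ _ => Subsingleton.elim _ _
      have h2 : (univ : Finset (Fin 1)).erase j = ∅ := by
        ext x
        simp [Subsingleton.elim x j]
      rw [h1, h2, Finset.prod_empty]
      simp
  | succ n ih =>
      intro l hl j
      have hlast : ∀ (m : Fin (n+2) → ℝ), Function.Injective m →
          (∑ σ ∈ univ.filter
              fun σ : Equiv.Perm (Fin (n+2)) => σ (Fin.last (n+1)) = Fin.last (n+1),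
            ∏ k : Fin (n+1), (m (σ k.castSucc))^2 / (m (σ k.castSucc) - m (σ k.succ)))
          = ∏ i ∈ univ.erase (Fin.last (n+1)),
              (m i)^2 / (m i - m (Fin.last (n+1))) := by
        intro m hm
        set L : Fin (n+1) → ℝ := fun i => m i.castSucc with hLdef
        have hLinj : Function.Injective L := fun a b h =>
          Fin.castSucc_injective _ (hm h)
        set e := finSuccAboveEquiv (Fin.last (n+1)) with he
        have hcoe : ∀ a : Fin (n+1), ((e a : {x : Fin (n+2) // x ≠ Fin.last (n+1)}) : Fin (n+2))
            = a.castSucc := by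
          intro a
          rw [he, finSuccAboveEquiv_apply]
          simp [Fin.succAbove_last]
        have hext1 : ∀ (τ : Equiv.Perm (Fin (n+1))) (a : Fin (n+1)),
            τ.extendDomain e a.castSucc = (τ a).castSucc := by
          intro τ a
          have h := Equiv.Perm.extendDomain_apply_image (e := τ) (f := e) a
          rwa [hcoe, hcoe] at h
        have hext2 : ∀ (τ : Equiv.Perm (Fin (n+1))),
            τ.extendDomain e (Fin.last (n+1)) = Fin.last (n+1) :=
          fun τ => Equiv.Perm.extendDomain_apply_not_subtype τ e (by simp)
        -- step 1 : reindex the σ-sum as a τ-sum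
        have step1 :
            (∑ σ ∈ univ.filter
                fun σ : Equiv.Perm (Fin (n+2)) => σ (Fin.last (n+1)) = Fin.last (n+1),
              ∏ k : Fin (n+1), (m (σ k.castSucc))^2 / (m (σ k.castSucc) - m (σ k.succ)))
            = ∑ τ : Equiv.Perm (Fin (n+1)),
                (∏ k : Fin n, (L (τ k.castSucc))^2 / (L (τ k.castSucc) - L (τ k.succ)))
                  * ((L (τ (Fin.last n)))^2 / (L (τ (Fin.last n)) - m (Fin.last (n+1)))) := by
          refine (Finset.sum_bij (fun (τ : Equiv.Perm (Fin (n+1))) _ => τ.extendDomain e)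
            ?_ ?_ ?_ ?_).symm
          · intro τ _
            exact Finset.mem_filter.mpr ⟨mem_univ _, hext2 τ⟩
          · intro τ₁ _ τ₂ _ h
            refine Equiv.ext fun a => ?_
            have := congrArg (fun σ : Equiv.Perm (Fin (n+2)) => σ a.castSucc) h
            simp only [hext1] at this
            exact Fin.castSucc_injective _ this
          · intro σ hσ
            have hσl : σ (Fin.last (n+1)) = Fin.last (n+1) := (Finset.mem_filter.mp hσ).2
            have hne : ∀ x : Fin (n+2), x ≠ Fin.last (n+1) → σ x ≠ Fin.last (n+1) := by
              intro x hx hc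
              exact hx (σ.injective (hc.trans hσl.symm))
            have hne' : ∀ x : Fin (n+2), x ≠ Fin.last (n+1) → σ⁻¹ x ≠ Fin.last (n+1) := by
              intro x hx hc
              apply hx
              have : σ (σ⁻¹ x) = σ (Fin.last (n+1)) := by rw [hc]
              rw [← Equiv.Perm.mul_apply, mul_inv_cancel, Equiv.Perm.one_apply, hσl] at this
              exact this
            refine ⟨{
              toFun := fun a => (σ a.castSucc).castPred
                (hne _ (Fin.castSucc_lt_last a).ne)
              invFun := fun a => (σ⁻¹ a.castSucc).castPred
                (hne' _ (Fin.castSucc_lt_last a).ne)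
              left_inv := by
                intro a
                apply Fin.castSucc_injective
                simp [Fin.castSucc_castPred]
              right_inv := by
                intro a
                apply Fin.castSucc_injective
                simp [Fin.castSucc_castPred] }, mem_univ _, ?_⟩
            ext x
            rcases eq_or_ne x (Fin.last (n+1)) with rfl | hx
            · rw [hext2, hσl]
            · obtain ⟨a, rfl⟩ := Fin.exists_castSucc_eq.mpr hx
              rw [hext1]
              simp [Fin.castSucc_castPred]
          · intro τ _
            rw [Fin.prod_univ_castSucc
              (f := fun k : Fin (n+1) => (m ((τ.extendDomain e) k.castSucc))^2
                / (m ((τ.extendDomain e) k.castSucc) - m ((τ.extendDomain e) k.succ)))]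
            congr 1
            · refine Finset.prod_congr rfl fun k _ => ?_
              rw [Fin.succ_castSucc, hext1, hext1]
            · rw [Fin.succ_last, hext1, hext2]
        rw [step1]
        -- step 2 : fiber the τ-sum over z = τ (last n)
        rw [← Finset.sum_fiberwise univ (fun τ : Equiv.Perm (Fin (n+1)) => τ (Fin.last n))
          (fun τ => (∏ k : Fin n, (L (τ k.castSucc))^2 / (L (τ k.castSucc) - L (τ k.succ)))
            * ((L (τ (Fin.last n)))^2 / (L (τ (Fin.last n)) - m (Fin.last (n+1)))))]
        have step2 : ∀ z : Fin (n+1),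
            (∑ τ ∈ univ.filter fun τ : Equiv.Perm (Fin (n+1)) => τ (Fin.last n) = z,
              (∏ k : Fin n, (L (τ k.castSucc))^2 / (L (τ k.castSucc) - L (τ k.succ)))
                * ((L (τ (Fin.last n)))^2 / (L (τ (Fin.last n)) - m (Fin.last (n+1)))))
            = (∏ i ∈ univ.erase z, (L i)^2 / (L i - L z))
                * ((L z)^2 / (L z - m (Fin.last (n+1)))) := by
          intro z
          rw [← ih L hLinj z, Finset.sum_mul]
          refine Finset.sum_congr rfl fun τ hτ => ?_
          rw [(Finset.mem_filter.mp hτ).2]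
        rw [Finset.sum_congr rfl fun z _ => step2 z]
        -- step 3 : lemB
        have hx : ∀ i : Fin (n+1), L i ≠ m (Fin.last (n+1)) := by
          intro i hLi
          exact (Fin.castSucc_lt_last i).ne (hm hLi)
        rw [lemB n L hLinj (m (Fin.last (n+1))) hx]
        -- step 4 : match with RHS over erase last
        have huniv : (univ : Finset (Fin (n+2))).erase (Fin.last (n+1))
            = Finset.map Fin.castSuccEmb univ := by
          ext x
          simp only [Finset.mem_erase, Finset.mem_map, mem_univ, and_true, true_and]
          constructor
          · intro hx
            obtain ⟨a, rfl⟩ := Fin.exists_castSucc_eq.mpr hx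
            exact ⟨a, rfl⟩
          · rintro ⟨a, rfl⟩
            exact (Fin.castSucc_lt_last a).ne
        rw [huniv, Finset.prod_map]
        rfl
      rcases eq_or_ne j (Fin.last (n+1)) with rfl | hj
      · exact hlast l hl
      · set c := Equiv.swap (Fin.last (n+1)) j with hc
        have hclast : c (Fin.last (n+1)) = j := Equiv.swap_apply_left _ _
        have hcj : c j = Fin.last (n+1) := Equiv.swap_apply_right _ _
        have hcc : ∀ x, c (c x) = x := fun x => Equiv.swap_apply_self _ _ x
        have step5 :
            (∑ σ ∈ univ.filter fun σ : Equiv.Perm (Fin (n+2)) => σ (Fin.last (n+1)) = j,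
              ∏ k : Fin (n+1), (l (σ k.castSucc))^2 / (l (σ k.castSucc) - l (σ k.succ)))
            = ∑ τ ∈ univ.filter
                fun τ : Equiv.Perm (Fin (n+2)) => τ (Fin.last (n+1)) = Fin.last (n+1),
              ∏ k : Fin (n+1), ((l ∘ c) (τ k.castSucc))^2
                / ((l ∘ c) (τ k.castSucc) - (l ∘ c) (τ k.succ)) := by
          refine Finset.sum_nbij' (fun σ => c⁻¹ * σ) (fun τ => c * τ) ?_ ?_ ?_ ?_ ?_
          · intro σ hσ
            refine Finset.mem_filter.mpr ⟨mem_univ _, ?_⟩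
            have hσl : σ (Fin.last (n+1)) = j := (Finset.mem_filter.mp hσ).2
            simp [Equiv.Perm.mul_apply, hσl, hc]
          · intro τ hτ
            refine Finset.mem_filter.mpr ⟨mem_univ _, ?_⟩
            have hτl : τ (Fin.last (n+1)) = Fin.last (n+1) := (Finset.mem_filter.mp hτ).2
            simp [Equiv.Perm.mul_apply, hτl, hclast]
          · intro σ _
            simp [mul_assoc]
          · intro τ _
            simp [mul_assoc]
          · intro σ _
            refine Finset.prod_congr rfl fun k _ => ?_
            simp [Equiv.Perm.mul_apply, Function.comp, hcc]
        rw [step5, hlast (l ∘ c) (hl.comp c.injective)]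
        refine Finset.prod_nbij' (fun x => c x) (fun x => c x) ?_ ?_ ?_ ?_ ?_
        · intro x hx
          refine Finset.mem_erase.mpr ⟨?_, mem_univ _⟩
          intro hcx
          exact (Finset.mem_erase.mp hx).1 (by rw [← hcj, ← hcx, hcc])
        · intro x hx
          refine Finset.mem_erase.mpr ⟨?_, mem_univ _⟩
          intro hcx
          exact (Finset.mem_erase.mp hx).1 (by rw [← hclast, ← hcx, hcc])
        · intro x _; exact hcc x
        · intro x _; exact hcc x
        · intro x _
          simp [Function.comp, hclast]

theorem stmt8 (n : ℕ) (l : Fin (n+1) → ℝ) (hl : Function.Injective l)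
    (hl0 : ∀ k, l k ≠ 0) :
    ∑ σ : Equiv.Perm (Fin (n+1)), ∏ k : Fin n,
      (l (σ k.castSucc))^2 / (l (σ k.castSucc) - l (σ k.succ))
    = ∑ s ∈ Finset.univ.powersetCard n, ∏ i ∈ s, l i := by
  rw [← Finset.sum_fiberwise univ (fun σ : Equiv.Perm (Fin (n+1)) => σ (Fin.last n))
    (fun σ => ∏ k : Fin n, (l (σ k.castSucc))^2 / (l (σ k.castSucc) - l (σ k.succ)))]
  rw [Finset.sum_congr rfl fun j _ => keyPerm n l hl j, lemC n l hl hl0]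
  refine Finset.sum_bij (fun (j : Fin (n+1)) _ => univ.erase j) ?_ ?_ ?_ ?_
  · intro j _
    rw [Finset.mem_powersetCard]
    refine ⟨Finset.erase_subset_iff_of_mem (mem_univ _) |>.mpr (subset_refl _), ?_⟩
    · rw [Finset.card_erase_of_mem (mem_univ _), card_univ, Fintype.card_fin]
      omega
  · intro j₁ _ j₂ _ h
    by_contra hne
    have h2 : j₁ ∈ univ.erase j₂ := Finset.mem_erase.mpr ⟨hne, mem_univ _⟩
    rw [← h] at h2
    exact (Finset.notMem_erase j₁ univ) h2
  · intro s hs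
    rw [Finset.mem_powersetCard] at hs
    have hcard : (univ \ s).card = 1 := by
      rw [Finset.card_sdiff_of_subset hs.1, card_univ, Fintype.card_fin, hs.2]
      omega
    obtain ⟨j, hj⟩ := Finset.card_eq_one.mp hcard
    refine ⟨j, mem_univ _, ?_⟩
    show univ.erase j = s
    rw [Finset.erase_eq, ← hj, Finset.sdiff_sdiff_self_left]
    simp
  · intro j _
    rfl
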